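/- Fix an integer d ≥ 3. Let C be an indeterminate and define φ_C(x) = x^d − Cd·x^{d−1} + C(d−1) ∈ (ℤ[C])[x], and for n ≥ 1 let P_n ∈ ℤ[C] be the evaluation at x = 0 of the n-th iterate of φ_C, i.e. P_n = φ_C^n(0). Then for every n ≥ 3 there exist at least three distinct elements α of an algebraic closure of ℚ such that α is a simple root of P_n and P_m(α) ≠ 0 for every proper divisor m of n with 1 ≤ m < n. -/

import Mathlib

open Polynomial

noncomputable section

/-- The `n`-th iterate of a polynomial under composition: `polyIter φ 0 = X`,
`polyIter φ (n+1) = φ ∘ (polyIter φ n)`. -/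
def polyIter {R : Type*} [CommRing R] (φ : Polynomial R) : ℕ → Polynomial R
  | 0 => X
  | n + 1 => φ.comp (polyIter φ n)

/-- The splitting field `K_n` of the `n`-th iterate of `φ ∈ ℤ[x]` over `ℚ`, inside a fixed
algebraic closure of `ℚ`. -/
def Kfield (φ : Polynomial ℤ) (n : ℕ) : IntermediateField ℚ (AlgebraicClosure ℚ) :=
  IntermediateField.adjoin ℚ ((polyIter φ n).rootSet (AlgebraicClosure ℚ))

/-- The order of `Gal(K_n / K_{n-1})`: the number of automorphisms of `K_n` over `ℚ`
fixing every element of `K_{n-1}` pointwise. -/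
def relGalCard (φ : Polynomial ℤ) (n : ℕ) : ℕ :=
  Nat.card {σ : Kfield φ n ≃ₐ[ℚ] Kfield φ n //
    ∀ (x : AlgebraicClosure ℚ) (_ : x ∈ Kfield φ (n - 1)) (hx' : x ∈ Kfield φ n),
      σ ⟨x, hx'⟩ = ⟨x, hx'⟩}

end

noncomputable section
namespace Stmt17
variable {d : ℕ} {ψ : Polynomial (Polynomial ℤ)}

def Q (ψ : Polynomial (Polynomial ℤ)) (n : ℕ) : Polynomial ℤ := (polyIter ψ n).eval 0

lemma Q_zero : Q ψ 0 = 0 := by simp [Q, polyIter]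

lemma Q_succ (hψ : ψ = X ^ d - C ((Polynomial.C (d : ℤ)) * X) * X ^ (d - 1)
      + C ((Polynomial.C ((d : ℤ) - 1)) * X)) (n : ℕ) :
    Q ψ (n + 1) = (Q ψ n) ^ d - (Polynomial.C (d : ℤ) * X) * (Q ψ n) ^ (d - 1)
      + Polynomial.C ((d : ℤ) - 1) * X := by
  simp only [Q, polyIter, eval_comp]
  rw [hψ]
  simp [eval_add, eval_sub, eval_pow, eval_mul]

end Stmt17

namespace Stmt17
variable {d : ℕ} {ψ : Polynomial (Polynomial ℤ)} {p : ℕ} [Fact p.Prime]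

def Rp (ψ : Polynomial (Polynomial ℤ)) (p : ℕ) (n : ℕ) : Polynomial (ZMod p) :=
  (Q ψ n).map (Int.castRingHom (ZMod p))

lemma Rp_succ (hd : 3 ≤ d)
    (hψ : ψ = X ^ d - C ((Polynomial.C (d : ℤ)) * X) * X ^ (d - 1)
      + C ((Polynomial.C ((d : ℤ) - 1)) * X)) (hpd : p ∣ d) (n : ℕ) :
    Rp ψ p (n + 1) = (Rp ψ p n) ^ d - X := by
  have hd0 : ((d : ℤ) : ZMod p) = 0 := by
    push_cast
    exact (ZMod.natCast_eq_zero_iff d p).mpr hpd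
  simp only [Rp, Q_succ hψ, Polynomial.map_add, Polynomial.map_sub, Polynomial.map_mul,
    Polynomial.map_pow, Polynomial.map_C, Polynomial.map_X, map_sub, map_one]
  have hd1 : ((d : ℕ) : (ZMod p)[X]) = 0 := by
    rw [← Polynomial.C_eq_natCast]
    simp [show ((d : ℕ) : ZMod p) = 0 from (ZMod.natCast_eq_zero_iff d p).mpr hpd]
  simp [hd0, hd1]
  ring

lemma Rp_one (hd : 3 ≤ d)
    (hψ : ψ = X ^ d - C ((Polynomial.C (d : ℤ)) * X) * X ^ (d - 1)
      + C ((Polynomial.C ((d : ℤ) - 1)) * X)) (hpd : p ∣ d) :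
    Rp ψ p 1 = -X := by
  rw [Rp_succ hd hψ hpd 0]
  have : Rp ψ p 0 = 0 := by simp [Rp, Q_zero]
  rw [this, zero_pow (by omega : d ≠ 0)]
  ring

lemma Rp_derivative (hd : 3 ≤ d)
    (hψ : ψ = X ^ d - C ((Polynomial.C (d : ℤ)) * X) * X ^ (d - 1)
      + C ((Polynomial.C ((d : ℤ) - 1)) * X)) (hpd : p ∣ d) (n : ℕ) :
    derivative (Rp ψ p (n + 1)) = -1 := by
  induction n with
  | zero => rw [Rp_one hd hψ hpd]; simp
  | succ k ih =>
    rw [Rp_succ hd hψ hpd (k + 1)]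
    rw [derivative_sub, derivative_pow, derivative_X]
    have hd0 : ((d : ℕ) : ZMod p) = 0 := (ZMod.natCast_eq_zero_iff d p).mpr hpd
    rw [hd0]
    simp

lemma Rp_natDegree (hd : 3 ≤ d)
    (hψ : ψ = X ^ d - C ((Polynomial.C (d : ℤ)) * X) * X ^ (d - 1)
      + C ((Polynomial.C ((d : ℤ) - 1)) * X)) (hpd : p ∣ d) (n : ℕ) :
    natDegree (Rp ψ p (n + 1)) = d ^ n := by
  induction n with
  | zero => rw [Rp_one hd hψ hpd]; simp
  | succ k ih =>
    rw [Rp_succ hd hψ hpd (k + 1)]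
    have hne : Rp ψ p (k + 1) ≠ 0 := by
      intro h
      have hpos : 0 < d ^ k := pow_pos (by omega : 0 < d) k
      rw [h, natDegree_zero] at ih
      omega
    have hpow : natDegree ((Rp ψ p (k + 1)) ^ d) = d ^ (k + 1) := by
      rw [natDegree_pow, ih]
      ring
    rw [natDegree_sub_eq_left_of_natDegree_lt, hpow]
    rw [hpow, natDegree_X]
    have : 3 ^ (k + 1) ≤ d ^ (k + 1) := Nat.pow_le_pow_left hd _
    have : 3 ≤ 3 ^ (k + 1) := Nat.le_self_pow (by omega) 3
    omega
end Stmt17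

namespace Stmt17
variable {d : ℕ} {ψ : Polynomial (Polynomial ℤ)} {p : ℕ} [Fact p.Prime]

lemma Q_natDegree_le (hd : 3 ≤ d)
    (hψ : ψ = X ^ d - C ((Polynomial.C (d : ℤ)) * X) * X ^ (d - 1)
      + C ((Polynomial.C ((d : ℤ) - 1)) * X)) (n : ℕ) :
    natDegree (Q ψ (n + 1)) ≤ d ^ n := by
  induction n with
  | zero =>
    rw [Q_succ hψ 0, Q_zero, zero_pow (by omega : d ≠ 0), zero_pow (by omega : d - 1 ≠ 0),
      pow_zero]
    simp only [mul_zero, sub_zero, zero_add]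
    exact le_trans (natDegree_C_mul_le _ _) (by simp)
  | succ k ih =>
    rw [Q_succ hψ (k + 1)]
    have hk1 : (1 : ℕ) ≤ d ^ k := Nat.one_le_pow _ _ (by omega)
    have h1 : natDegree ((Q ψ (k+1)) ^ d) ≤ d ^ (k + 1) := by
      refine le_trans (natDegree_pow_le) ?_
      calc d * natDegree (Q ψ (k+1)) ≤ d * d ^ k := Nat.mul_le_mul_left d ih
        _ = d ^ (k+1) := by ring
    have h2 : natDegree ((Polynomial.C (d:ℤ) * X) * (Q ψ (k+1)) ^ (d-1)) ≤ d ^ (k + 1) := by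
      refine le_trans (natDegree_mul_le) ?_
      have ha : natDegree (Polynomial.C (d:ℤ) * X) ≤ 1 :=
        le_trans (natDegree_C_mul_le _ _) (by simp)
      have hb : natDegree ((Q ψ (k+1)) ^ (d-1)) ≤ (d-1) * d ^ k :=
        le_trans natDegree_pow_le (Nat.mul_le_mul_left _ ih)
      have : 1 + (d-1) * d ^ k ≤ d ^ (k+1) := by
        have hpk : d ^ (k+1) = d * d ^ k := by ring
        have e1 : (d-1) * d ^ k = d * d ^ k - d ^ k := Nat.sub_one_mul _ _
        have e2 : d ^ k ≤ d * d ^ k := Nat.le_mul_of_pos_left _ (by omega)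
        omega
      omega
    have h3 : natDegree (Polynomial.C ((d:ℤ)-1) * X) ≤ d ^ (k+1) := by
      refine le_trans (natDegree_C_mul_le _ _) ?_
      simp only [natDegree_X]
      exact Nat.one_le_pow _ _ (by omega)
    calc natDegree _ ≤ _ := natDegree_add_le _ _
      _ ≤ d ^ (k+1) := by
        refine max_le (le_trans (natDegree_sub_le _ _) (max_le h1 h2)) h3

lemma Q_natDegree (hd : 3 ≤ d)
    (hψ : ψ = X ^ d - C ((Polynomial.C (d : ℤ)) * X) * X ^ (d - 1)
      + C ((Polynomial.C ((d : ℤ) - 1)) * X)) (hpd : p ∣ d) (n : ℕ) :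
    natDegree (Q ψ (n + 1)) = d ^ n := by
  refine le_antisymm (Q_natDegree_le hd hψ n) ?_
  calc d ^ n = natDegree (Rp ψ p (n + 1)) := (Rp_natDegree hd hψ hpd n).symm
    _ ≤ natDegree (Q ψ (n + 1)) := natDegree_map_le

lemma Q_lc (hd : 3 ≤ d)
    (hψ : ψ = X ^ d - C ((Polynomial.C (d : ℤ)) * X) * X ^ (d - 1)
      + C ((Polynomial.C ((d : ℤ) - 1)) * X)) (hpd : p ∣ d) (n : ℕ) :
    (Int.castRingHom (ZMod p)) ((Q ψ (n + 1)).leadingCoeff) ≠ 0 := by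
  have h1 : natDegree (Rp ψ p (n + 1)) = natDegree (Q ψ (n + 1)) := by
    rw [Rp_natDegree hd hψ hpd n, Q_natDegree hd hψ hpd n]
  have h0 : Rp ψ p (n + 1) ≠ 0 := by
    intro h
    have := Rp_natDegree hd hψ hpd n
    rw [h, natDegree_zero] at this
    have : 0 < d ^ n := pow_pos (by omega : 0 < d) n
    omega
  have := leadingCoeff_ne_zero.mpr h0
  rwa [leadingCoeff, h1, Rp, coeff_map] at this

end Stmt17

namespace Stmt17
open scoped nonZeroDivisors
variable {d : ℕ} {ψ : Polynomial (Polynomial ℤ)} {p : ℕ} [Fact p.Prime]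

lemma Q_separable (hd : 3 ≤ d)
    (hψ : ψ = X ^ d - C ((Polynomial.C (d : ℤ)) * X) * X ^ (d - 1)
      + C ((Polynomial.C ((d : ℤ) - 1)) * X)) (hpd : p ∣ d) (n : ℕ) :
    ((Q ψ (n + 1)).map (algebraMap ℤ ℚ)).Separable := by
  classical
  set f : ℤ[X] := Q ψ (n + 1) with hf
  have hf0 : f ≠ 0 := by
    intro h
    have := Q_natDegree hd hψ hpd n (p := p)
    rw [← hf, h, natDegree_zero] at this
    have : 0 < d ^ n := pow_pos (by omega : 0 < d) n
    omega
  have hmapinj : Function.Injective (algebraMap ℤ ℚ) := fun a b h => by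
    exact_mod_cast h
  have castinj : ∀ x : ℤ, (algebraMap ℤ ℚ) x = 0 → x = 0 := fun x h =>
    hmapinj (by rw [h]; simp)
  have hfQ0 : f.map (algebraMap ℤ ℚ) ≠ 0 := by
    simpa using (Polynomial.map_ne_zero_iff hmapinj).mpr hf0
  -- the derivative of f is nonzero
  have hderivmod : (derivative f).map (Int.castRingHom (ZMod p)) = -1 := by
    rw [← derivative_map]
    exact Rp_derivative hd hψ hpd n
  have hf'0 : derivative f ≠ 0 := by
    intro h
    rw [h, Polynomial.map_zero] at hderivmod
    exact absurd hderivmod.symm (by simp)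
  by_contra hsep
  rw [Polynomial.Separable] at hsep
  -- common irreducible factor π over ℚ
  have hgcdunit : ¬ IsUnit (EuclideanDomain.gcd (f.map (algebraMap ℤ ℚ))
      (derivative (f.map (algebraMap ℤ ℚ)))) := fun h =>
    hsep (EuclideanDomain.gcd_isUnit_iff.mp h)
  have hgcd0 : EuclideanDomain.gcd (f.map (algebraMap ℤ ℚ))
      (derivative (f.map (algebraMap ℤ ℚ))) ≠ 0 := by
    intro h
    exact hfQ0 (EuclideanDomain.gcd_eq_zero_iff.mp h).1
  obtain ⟨π, hπirr, hπdvd⟩ := WfDvdMonoid.exists_irreducible_factor hgcdunit hgcd0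
  have hπf : π ∣ f.map (algebraMap ℤ ℚ) :=
    hπdvd.trans (EuclideanDomain.gcd_dvd_left _ _)
  have hπf' : π ∣ (derivative f).map (algebraMap ℤ ℚ) := by
    rw [derivative_map] at *
    exact hπdvd.trans (EuclideanDomain.gcd_dvd_right _ _)
  have hπ0 : π ≠ 0 := hπirr.ne_zero
  -- integer model G of π
  obtain ⟨⟨s, hs⟩, hsmap⟩ :=
    IsLocalization.integerNormalization_map_to_map ℤ⁰ π
  set N : ℤ[X] := IsLocalization.integerNormalization ℤ⁰ π with hN
  have hs0 : (s : ℤ) ≠ 0 := nonZeroDivisors.ne_zero hs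
  have hNmap : N.map (algebraMap ℤ ℚ) = Polynomial.C ((s : ℤ) : ℚ) * π := by
    rw [hsmap]
    ext i
    simp [coeff_smul, Algebra.smul_def]
  set G : ℤ[X] := N.primPart with hG
  have hN0 : N ≠ 0 := by
    intro h
    rw [h, Polynomial.map_zero] at hNmap
    have hC : Polynomial.C ((s : ℤ) : ℚ) ≠ 0 := by
      simpa using hs0
    rcases mul_eq_zero.mp hNmap.symm with h' | h'
    · exact hC h'
    · exact hπ0 h'
  have hGmap : G.map (algebraMap ℤ ℚ) =
      Polynomial.C ((algebraMap ℤ ℚ) N.content)⁻¹ * (Polynomial.C ((s : ℤ) : ℚ) * π) := by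
    have hcontent0 : ((algebraMap ℤ ℚ) N.content) ≠ 0 :=
      fun h => hN0 (content_eq_zero_iff.mp (castinj _ h))
    have := N.eq_C_content_mul_primPart
    have h2 : N.map (algebraMap ℤ ℚ)
        = Polynomial.C ((algebraMap ℤ ℚ) N.content) * G.map (algebraMap ℤ ℚ) := by
      conv_lhs => rw [this]
      rw [Polynomial.map_mul, Polynomial.map_C]
    rw [← hNmap, h2, ← mul_assoc, ← Polynomial.C_mul, inv_mul_cancel₀ hcontent0]
    simp
  -- unit multiple: map G ∣ π and π ∣ map G
  have hcontentN0 : ((algebraMap ℤ ℚ) N.content) ≠ 0 :=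
    fun h => hN0 (content_eq_zero_iff.mp (castinj _ h))
  have hπdvdG : π ∣ G.map (algebraMap ℤ ℚ) := by
    rw [hGmap]
    exact Dvd.dvd.mul_left (dvd_mul_left π _) _
  have hu : IsUnit (Polynomial.C ((algebraMap ℤ ℚ) N.content)⁻¹ *
      Polynomial.C ((s : ℤ) : ℚ)) := by
    refine IsUnit.mul ?_ ?_ <;> rw [Polynomial.isUnit_C]
    · exact (isUnit_iff_ne_zero).mpr (inv_ne_zero hcontentN0)
    · exact (isUnit_iff_ne_zero).mpr (by exact_mod_cast hs0)
  have hGdvdπ : G.map (algebraMap ℤ ℚ) ∣ π := by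
    rw [hGmap, ← mul_assoc]
    exact hu.mul_left_dvd.mpr dvd_rfl
  -- G divides f and derivative f over ℤ
  have hGprim : G.IsPrimitive := N.isPrimitive_primPart
  have hdvd_transfer : ∀ g : ℤ[X], g ≠ 0 → π ∣ g.map (algebraMap ℤ ℚ) → G ∣ g := by
    intro g hg0 hπg
    have hcg : ((algebraMap ℤ ℚ) g.content) ≠ 0 :=
      fun h => hg0 (content_eq_zero_iff.mp (castinj _ h))
    have hmapg : g.map (algebraMap ℤ ℚ)
        = Polynomial.C ((algebraMap ℤ ℚ) g.content) * (g.primPart.map (algebraMap ℤ ℚ)) := by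
      conv_lhs => rw [g.eq_C_content_mul_primPart]
      rw [Polynomial.map_mul, Polynomial.map_C]
    have hcu : IsUnit (Polynomial.C ((algebraMap ℤ ℚ) g.content)) :=
      Polynomial.isUnit_C.mpr ((isUnit_iff_ne_zero).mpr hcg)
    have hπg' : π ∣ g.primPart.map (algebraMap ℤ ℚ) := by
      rw [hmapg] at hπg
      exact (hcu.dvd_mul_left).mp hπg
    have : G.map (algebraMap ℤ ℚ) ∣ g.primPart.map (algebraMap ℤ ℚ) :=
      hGdvdπ.trans hπg'
    exact (hGprim.dvd_of_fraction_map_dvd_fraction_map this).trans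
      g.primPart_dvd
  have hGf : G ∣ f := hdvd_transfer f hf0 hπf
  have hGf' : G ∣ derivative f := hdvd_transfer _ hf'0 hπf'
  -- mod p, G divides -1, so it is a unit
  have hGmodunit : IsUnit (G.map (Int.castRingHom (ZMod p))) := by
    have : G.map (Int.castRingHom (ZMod p)) ∣
        (derivative f).map (Int.castRingHom (ZMod p)) :=
      Polynomial.map_dvd _ hGf'
    rw [hderivmod] at this
    exact isUnit_of_dvd_unit this (isUnit_one.neg)
  have hGdeg0 : natDegree (G.map (Int.castRingHom (ZMod p))) = 0 :=
    natDegree_eq_zero_of_isUnit hGmodunit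
  -- but G is nonconstant with leading coefficient not divisible by p
  have hG0 : G ≠ 0 := N.primPart_ne_zero
  have hGQ0 : G.map (algebraMap ℤ ℚ) ≠ 0 := (Polynomial.map_ne_zero_iff hmapinj).mpr hG0
  have hπdeg : 1 ≤ natDegree π := by
    rcases Nat.eq_zero_or_pos (natDegree π) with h | h
    · exfalso
      have := Polynomial.eq_C_of_natDegree_eq_zero h
      have hc0 : π.coeff 0 ≠ 0 := fun hc => hπ0 (by rw [this, hc, Polynomial.C_0])
      exact hπirr.not_isUnit (this ▸ Polynomial.isUnit_C.mpr ((isUnit_iff_ne_zero).mpr hc0))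
    · exact h
  have hGdeg1 : 1 ≤ natDegree G :=
    le_trans (le_trans hπdeg (Polynomial.natDegree_le_of_dvd hπdvdG hGQ0)) natDegree_map_le
  -- p does not divide the leading coefficient of G
  obtain ⟨h1, hh1⟩ := hGf
  have hlc : (Int.castRingHom (ZMod p)) G.leadingCoeff ≠ 0 := by
    have := Q_lc hd hψ hpd n
    rw [← hf, hh1, leadingCoeff_mul, map_mul] at this
    exact left_ne_zero_of_mul this
  have := natDegree_map_of_leadingCoeff_ne_zero (Int.castRingHom (ZMod p)) hlc
  omega
end Stmt17

namespace Stmt17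

lemma geom_le {d : ℕ} (hd2 : 2 ≤ d) : ∀ k : ℕ, ∑ j ∈ Finset.range k, d ^ j ≤ d ^ k - 1 := by
  intro k
  induction k with
  | zero => simp
  | succ k ih =>
    rw [Finset.sum_range_succ, pow_succ]
    have h1 : 1 ≤ d ^ k := Nat.one_le_pow _ _ (by omega)
    have h2 : d ^ k * 2 ≤ d ^ k * d := Nat.mul_le_mul_left _ hd2
    omega

end Stmt17

end

open Stmt17 in
/-- Fix `d ≥ 3` and let `φ_C(x) = x^d - Cd·x^{d-1} + C(d-1)` over `ℤ[C]`,
with `P_n = φ_C^n(0) ∈ ℤ[C]`. Then for every `n ≥ 3` there are at least three distinct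
elements `α` of an algebraic closure of `ℚ` that are simple roots of `P_n` and are not roots of
`P_m` for any proper divisor `m` of `n` with `1 ≤ m < n`. -/
theorem stmt_17 (d : ℕ) (hd : 3 ≤ d)
    (ψ : Polynomial (Polynomial ℤ))
    (hψ : ψ = X ^ d - C ((Polynomial.C (d : ℤ)) * X) * X ^ (d - 1)
      + C ((Polynomial.C ((d : ℤ) - 1)) * X)) :
    ∀ n : ℕ, 3 ≤ n →
      ∃ α₁ α₂ α₃ : AlgebraicClosure ℚ, α₁ ≠ α₂ ∧ α₁ ≠ α₃ ∧ α₂ ≠ α₃ ∧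
        ∀ α ∈ ({α₁, α₂, α₃} : Set (AlgebraicClosure ℚ)),
          Polynomial.rootMultiplicity α
              (((polyIter ψ n).eval 0).map (algebraMap ℤ (AlgebraicClosure ℚ))) = 1 ∧
            ∀ m : ℕ, m ∣ n → 1 ≤ m → m < n →
              Polynomial.aeval α ((polyIter ψ m).eval 0) ≠ 0 := by
  intro n hn
  classical
  set K := AlgebraicClosure ℚ
  set p := d.minFac with hpdef
  have hp : p.Prime := Nat.minFac_prime (by omega)
  haveI := Fact.mk hp
  have hpd : p ∣ d := Nat.minFac_dvd d
  haveI : CharZero K := charZero_of_injective_algebraMap (algebraMap ℚ K).injective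
  have hKinj : Function.Injective (algebraMap ℤ K) := by
    exact (algebraMap ℤ K).injective_int
  have hcomp : (algebraMap ℚ K).comp (algebraMap ℤ ℚ) = algebraMap ℤ K := by
    ext1
    simp
  -- the polynomials over K
  set F : ℕ → K[X] := fun m => (Q ψ m).map (algebraMap ℤ K) with hF
  have hFmap : ∀ m, F m = ((Q ψ m).map (algebraMap ℤ ℚ)).map (algebraMap ℚ K) := by
    intro m
    rw [hF, Polynomial.map_map, hcomp]
  have hFdeg : ∀ m : ℕ, (F (m + 1)).natDegree = d ^ m := by
    intro m
    rw [hF]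
    rw [natDegree_map_eq_of_injective hKinj]
    exact Q_natDegree hd hψ hpd m
  have hFne : ∀ m : ℕ, F (m + 1) ≠ 0 := by
    intro m h
    have := hFdeg m
    rw [h, natDegree_zero] at this
    have : 0 < d ^ m := pow_pos (by omega : 0 < d) m
    omega
  -- separability over K
  obtain ⟨n', rfl⟩ : ∃ n', n = n' + 1 := ⟨n - 1, by omega⟩
  have hsep : (F (n' + 1)).Separable := by
    rw [hFmap]
    exact (Q_separable hd hψ hpd n').map
  have hnodup : (F (n' + 1)).roots.Nodup := nodup_roots hsep
  have hsplits : (F (n' + 1)).Splits := IsAlgClosed.splits _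
  have hroots_card : (F (n' + 1)).roots.toFinset.card = d ^ n' := by
    rw [Multiset.toFinset_card_of_nodup hnodup,
      (Polynomial.splits_iff_card_roots).mp hsplits, hFdeg]
  -- the bad set
  set B : Finset K := (n' + 1).properDivisors.biUnion
    (fun m => (F m).roots.toFinset) with hB
  have hBcard : B.card ≤ d ^ (n' - 1) - 1 := by
    calc B.card ≤ ∑ m ∈ (n' + 1).properDivisors, (F m).roots.toFinset.card :=
          Finset.card_biUnion_le
      _ ≤ ∑ m ∈ (n' + 1).properDivisors, d ^ (m - 1) := by
          refine Finset.sum_le_sum ?_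
          intro m hm
          obtain ⟨hmdvd, hmlt⟩ := Nat.mem_properDivisors.mp hm
          have hm1 : 1 ≤ m := Nat.pos_of_dvd_of_pos hmdvd (by omega)
          obtain ⟨m', rfl⟩ : ∃ m'', m = m'' + 1 := ⟨m - 1, by omega⟩
          calc (F (m' + 1)).roots.toFinset.card ≤ Multiset.card (F (m' + 1)).roots :=
                Multiset.toFinset_card_le _
            _ ≤ (F (m' + 1)).natDegree := Polynomial.card_roots' _
            _ = d ^ (m' + 1 - 1) := by rw [hFdeg, Nat.add_sub_cancel]
      _ ≤ ∑ m ∈ Finset.Ico 1 n', d ^ (m - 1) := by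
          refine Finset.sum_le_sum_of_subset ?_
          intro m hm
          obtain ⟨hmdvd, hmlt⟩ := Nat.mem_properDivisors.mp hm
          have hm1 : 1 ≤ m := Nat.pos_of_dvd_of_pos hmdvd (by omega)
          rw [Finset.mem_Ico]
          refine ⟨hm1, ?_⟩
          obtain ⟨k, hk⟩ := hmdvd
          have hk2 : 2 ≤ k := by
            rcases Nat.lt_or_ge k 2 with h | h
            · interval_cases k <;> omega
            · exact h
          have h2m : 2 * m ≤ n' + 1 := by
            calc 2 * m ≤ k * m := Nat.mul_le_mul_right m hk2
              _ = n' + 1 := by rw [hk]; ring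
          omega
      _ = ∑ j ∈ Finset.range (n' - 1), d ^ j := by
          rw [Finset.sum_Ico_eq_sum_range]
          refine Finset.sum_congr rfl ?_
          intro j _
          congr 1
          omega
      _ ≤ d ^ (n' - 1) - 1 := geom_le (by omega) _
  -- the good set has at least 3 elements
  set S : Finset K := (F (n' + 1)).roots.toFinset \ B with hS
  have hScard : 2 < S.card := by
    have h1 : (F (n' + 1)).roots.toFinset.card - B.card ≤ S.card :=
      Finset.le_card_sdiff _ _
    have e3 : d ^ n' = d * d ^ (n' - 1) := by
      conv_lhs => rw [show n' = (n' - 1) + 1 by omega]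
      rw [pow_succ]
      ring
    have e4 : 1 ≤ d ^ (n' - 1) := Nat.one_le_pow _ _ (by omega)
    have e5 : 3 * d ^ (n' - 1) ≤ d * d ^ (n' - 1) := Nat.mul_le_mul_right _ hd
    omega
  obtain ⟨α₁, α₂, α₃, h1, h2, h3, h12, h13, h23⟩ := Finset.two_lt_card_iff.mp hScard
  refine ⟨α₁, α₂, α₃, h12, h13, h23, ?_⟩
  intro α hα
  have hαS : α ∈ S := by
    rcases hα with h | h | h <;> subst h <;> assumption
  rw [hS, Finset.mem_sdiff] at hαS
  obtain ⟨hαroot, hαB⟩ := hαS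
  constructor
  · -- simple root
    have hmem : α ∈ (F (n' + 1)).roots := Multiset.mem_toFinset.mp hαroot
    have : (F (n' + 1)).roots.count α = 1 := Multiset.count_eq_one_of_mem hnodup hmem
    rw [← Polynomial.count_roots]
    exact this
  · -- avoids proper divisors
    intro m hmdvd hm1 hmlt hev
    apply hαB
    rw [hB, Finset.mem_biUnion]
    refine ⟨m, Nat.mem_properDivisors.mpr ⟨hmdvd, hmlt⟩, ?_⟩
    obtain ⟨m', rfl⟩ : ∃ m'', m = m'' + 1 := ⟨m - 1, by omega⟩
    rw [Multiset.mem_toFinset, Polynomial.mem_roots (hFne m')]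
    rw [Polynomial.IsRoot.def, hF]
    rw [Polynomial.eval_map, ← Polynomial.aeval_def]
    exact hev
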